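/- Let ι be a finite nonempty type and p, q : ι → ℝ with p_k > 0, q_k > 0 for all k and Σ_k p_k = Σ_k q_k = 1. Let γ > 0 with γ ≠ 1. Define Λ̄ = max over pairs (k,ℓ) of |(1/2)·log((p_k·q_ℓ)/(p_ℓ·q_k))|, and define Φ : ℝ → ℝ by Φ(ϑ) = −(γ/(1−γ))·log( [Σ_k p_k^{1/γ}·(e^{ϑ/(2γ)}·p_k^{1/γ} + e^{−ϑ/(2γ)}·q_k^{1/γ})^{γ−1}] / [Σ_k q_k^{1/γ}·(e^{ϑ/(2γ)}·p_k^{1/γ} + e^{−ϑ/(2γ)}·q_k^{1/γ})^{γ−1}] ). Then Φ is Lipschitz with constant (1 − e^{−Λ̄/γ})/(1 + e^{−Λ̄/γ}) < 1, and Φ has exactly one fixed point ϑ*_γ ∈ ℝ. -/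

import Mathlib

lemma key_pair {R z w : ℝ} (hR : 1 ≤ R) (hz : 0 < z) (hw : 0 < w)
    (h : z ≤ R ^ 2 * w) :
    (z - 1) / (z + 1) - (w - 1) / (w + 1) ≤ 2 * ((R - 1) / (R + 1)) := by
  have hz1 : (0:ℝ) < z + 1 := by linarith
  have hw1 : (0:ℝ) < w + 1 := by linarith
  have hR1 : (0:ℝ) < R + 1 := by linarith
  have h1 : (z - 1) / (z + 1) - (w - 1) / (w + 1) = 2 * (z - w) / ((z + 1) * (w + 1)) := by
    field_simp; ring
  have h2 : 2 * ((R - 1) / (R + 1)) = 2 * (R - 1) / (R + 1) := by ring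
  rw [h1, h2, div_le_div_iff₀ (by positivity) hR1]
  rcases le_or_gt ((R - 1) * w) 2 with hc | hc
  · nlinarith [mul_nonneg (sub_nonneg.2 h) (by linarith : (0:ℝ) ≤ 2 - (R-1)*w),
      mul_nonneg (sub_nonneg.2 hR) (sq_nonneg (R*w - 1))]
  · nlinarith [mul_pos hz (by linarith : (0:ℝ) < (R-1)*w - 2), hw.le, sub_nonneg.2 hR]

lemma avg_mem {ι : Type*} [Fintype ι] [Nonempty ι] (w r : ι → ℝ) (hw : ∀ k, 0 < w k)
    (m M : ℝ) (hm : ∀ k, m ≤ r k) (hM : ∀ k, r k ≤ M) :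
    m ≤ (∑ k, w k * r k) / (∑ k, w k) ∧ (∑ k, w k * r k) / (∑ k, w k) ≤ M := by
  have hs : 0 < ∑ k, w k := Finset.sum_pos (fun k _ => hw k) Finset.univ_nonempty
  constructor
  · rw [le_div_iff₀ hs]
    calc m * ∑ k, w k = ∑ k, w k * m := by rw [Finset.mul_sum]; simp [mul_comm]
    _ ≤ ∑ k, w k * r k := Finset.sum_le_sum fun k _ =>
        mul_le_mul_of_nonneg_left (hm k) (hw k).le
  · rw [div_le_iff₀ hs]
    calc (∑ k, w k * r k) ≤ ∑ k, w k * M := Finset.sum_le_sum fun k _ =>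
        mul_le_mul_of_nonneg_left (hM k) (hw k).le
    _ = M * ∑ k, w k := by rw [Finset.mul_sum]; simp [mul_comm]

theorem stmt_18 {ι : Type*} [Fintype ι] [Nonempty ι] (p q : ι → ℝ)
    (hp : ∀ k, 0 < p k) (hq : ∀ k, 0 < q k)
    (hps : (∑ k, p k) = 1) (hqs : (∑ k, q k) = 1)
    (γ : ℝ) (hγ : 0 < γ) (hγ1 : γ ≠ 1)
    (Λ : ℝ)
    (hΛ : Λ = Finset.univ.sup' Finset.univ_nonempty
      (fun kl : ι × ι => |(1/2) * Real.log ((p kl.1 * q kl.2) / (p kl.2 * q kl.1))|))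
    (Φ : ℝ → ℝ)
    (hΦ : ∀ ϑ : ℝ, Φ ϑ = -(γ / (1 - γ)) * Real.log
      ((∑ k, (p k) ^ (1/γ) *
          (Real.exp (ϑ / (2 * γ)) * (p k) ^ (1/γ)
            + Real.exp (-ϑ / (2 * γ)) * (q k) ^ (1/γ)) ^ (γ - 1)) /
       (∑ k, (q k) ^ (1/γ) *
          (Real.exp (ϑ / (2 * γ)) * (p k) ^ (1/γ)
            + Real.exp (-ϑ / (2 * γ)) * (q k) ^ (1/γ)) ^ (γ - 1)))) :
    (∀ x y : ℝ, |Φ x - Φ y|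
      ≤ ((1 - Real.exp (-Λ / γ)) / (1 + Real.exp (-Λ / γ))) * |x - y|) ∧
    ((1 - Real.exp (-Λ / γ)) / (1 + Real.exp (-Λ / γ))) < 1 ∧
    (∃! ϑstar : ℝ, Φ ϑstar = ϑstar) := by
  have hγ0 : γ ≠ 0 := ne_of_gt hγ
  have h1γ : (1:ℝ) - γ ≠ 0 := fun h => hγ1 (by linarith)
  -- basic objects
  set a : ι → ℝ := fun k => (p k) ^ (1/γ) with ha_def
  set b : ι → ℝ := fun k => (q k) ^ (1/γ) with hb_def
  have ha : ∀ k, 0 < a k := fun k => Real.rpow_pos_of_pos (hp k) _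
  have hb : ∀ k, 0 < b k := fun k => Real.rpow_pos_of_pos (hq k) _
  set S : ℝ → ι → ℝ := fun ϑ k => Real.exp (ϑ/(2*γ)) * a k + Real.exp (-ϑ/(2*γ)) * b k
    with hS_def
  have hS : ∀ ϑ k, 0 < S ϑ k := fun ϑ k => by
    have := (Real.exp_pos (ϑ/(2*γ))); have := (Real.exp_pos (-ϑ/(2*γ)))
    have := ha k; have := hb k
    positivity
  set F : ℝ → ℝ := fun ϑ => ∑ k, a k * S ϑ k ^ (γ-1) with hF_def
  set G : ℝ → ℝ := fun ϑ => ∑ k, b k * S ϑ k ^ (γ-1) with hG_def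
  have hF : ∀ ϑ, 0 < F ϑ := fun ϑ => Finset.sum_pos
    (fun k _ => mul_pos (ha k) (Real.rpow_pos_of_pos (hS ϑ k) _)) Finset.univ_nonempty
  have hG : ∀ ϑ, 0 < G ϑ := fun ϑ => Finset.sum_pos
    (fun k _ => mul_pos (hb k) (Real.rpow_pos_of_pos (hS ϑ k) _)) Finset.univ_nonempty
  have hΦeq : ∀ ϑ, Φ ϑ = -(γ/(1-γ)) * (Real.log (F ϑ) - Real.log (G ϑ)) := by
    intro ϑ
    rw [hΦ ϑ, ← Real.log_div (hF ϑ).ne' (hG ϑ).ne']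
  set T : ℝ → ι → ℝ := fun ϑ k => Real.exp (ϑ/(2*γ)) * a k - Real.exp (-ϑ/(2*γ)) * b k
    with hT_def
  -- derivative of S
  have hS' : ∀ (ϑ : ℝ) k, HasDerivAt (fun t => S t k) ((1/(2*γ)) * T ϑ k) ϑ := by
    intro ϑ k
    have h1 : HasDerivAt (fun t : ℝ => t/(2*γ)) (1/(2*γ)) ϑ := by
      simpa using (hasDerivAt_id ϑ).div_const (2*γ)
    have h2 : HasDerivAt (fun t : ℝ => -t/(2*γ)) (-1/(2*γ)) ϑ :=
      (hasDerivAt_id ϑ).neg.div_const (2*γ)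
    have := ((h1.exp.mul_const (a k)).add (h2.exp.mul_const (b k)))
    refine this.congr_deriv (Eq.symm ?_)
    show 1/(2*γ) * (Real.exp (ϑ/(2*γ)) * a k - Real.exp (-ϑ/(2*γ)) * b k) = _
    ring
  -- derivative of F and G
  have hF' : ∀ ϑ, HasDerivAt F
      (((γ-1)/(2*γ)) * ∑ k, a k * S ϑ k ^ (γ-1) * (T ϑ k / S ϑ k)) ϑ := by
    intro ϑ
    have h : ∀ k ∈ Finset.univ, HasDerivAt (fun t => a k * S t k ^ (γ-1))
        (a k * ((1/(2*γ)) * T ϑ k * (γ-1) * S ϑ k ^ (γ-1-1))) ϑ := fun k _ =>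
      ((hS' ϑ k).rpow_const (Or.inl (hS ϑ k).ne')).const_mul (a k)
    have := HasDerivAt.fun_sum h
    refine this.congr_deriv (Eq.symm ?_)
    rw [Finset.mul_sum]
    refine Finset.sum_congr rfl fun k _ => ?_
    have hsne : S ϑ k ≠ 0 := (hS ϑ k).ne'
    have hpow : S ϑ k ^ (γ-1-1) = S ϑ k ^ (γ-1) * (S ϑ k)⁻¹ := by
      rw [Real.rpow_sub (hS ϑ k), Real.rpow_one, div_eq_mul_inv]
    rw [hpow]
    rw [div_eq_mul_inv, div_eq_mul_inv]
    generalize S ϑ k ^ (γ-1) = P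
    generalize hSv : S ϑ k = Sv at hsne ⊢
    field_simp
  have hG' : ∀ ϑ, HasDerivAt G
      (((γ-1)/(2*γ)) * ∑ k, b k * S ϑ k ^ (γ-1) * (T ϑ k / S ϑ k)) ϑ := by
    intro ϑ
    have h : ∀ k ∈ Finset.univ, HasDerivAt (fun t => b k * S t k ^ (γ-1))
        (b k * ((1/(2*γ)) * T ϑ k * (γ-1) * S ϑ k ^ (γ-1-1))) ϑ := fun k _ =>
      ((hS' ϑ k).rpow_const (Or.inl (hS ϑ k).ne')).const_mul (b k)
    have := HasDerivAt.fun_sum h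
    refine this.congr_deriv (Eq.symm ?_)
    rw [Finset.mul_sum]
    refine Finset.sum_congr rfl fun k _ => ?_
    have hsne : S ϑ k ≠ 0 := (hS ϑ k).ne'
    have hpow : S ϑ k ^ (γ-1-1) = S ϑ k ^ (γ-1) * (S ϑ k)⁻¹ := by
      rw [Real.rpow_sub (hS ϑ k), Real.rpow_one, div_eq_mul_inv]
    rw [hpow]
    rw [div_eq_mul_inv, div_eq_mul_inv]
    generalize S ϑ k ^ (γ-1) = P
    generalize hSv : S ϑ k = Sv at hsne ⊢
    field_simp
  -- derivative of Φ
  set D : ℝ → ℝ := fun ϑ => (1/2) *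
      ((∑ k, a k * S ϑ k ^ (γ-1) * (T ϑ k / S ϑ k)) / F ϑ
        - (∑ k, b k * S ϑ k ^ (γ-1) * (T ϑ k / S ϑ k)) / G ϑ) with hD_def
  have hΦ' : ∀ ϑ, HasDerivAt Φ (D ϑ) ϑ := by
    intro ϑ
    have hfun : Φ = fun t => -(γ/(1-γ)) * (Real.log (F t) - Real.log (G t)) :=
      funext hΦeq
    rw [hfun]
    have hl := ((hF' ϑ).log (hF ϑ).ne').sub ((hG' ϑ).log (hG ϑ).ne')
    have := hl.const_mul (-(γ/(1-γ)))
    refine this.congr_deriv (Eq.symm ?_)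
    show (1/2) *
        ((∑ k, a k * S ϑ k ^ (γ-1) * (T ϑ k / S ϑ k)) / F ϑ
          - (∑ k, b k * S ϑ k ^ (γ-1) * (T ϑ k / S ϑ k)) / G ϑ) = _
    have hFne := (hF ϑ).ne'
    have hGne := (hG ϑ).ne'
    generalize hA : (∑ k, a k * S ϑ k ^ (γ-1) * (T ϑ k / S ϑ k)) = A
    generalize hB : (∑ k, b k * S ϑ k ^ (γ-1) * (T ϑ k / S ϑ k)) = B
    generalize hFv : F ϑ = Fv at hFne ⊢
    generalize hGv : G ϑ = Gv at hGne ⊢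
    field_simp
    ring
  -- the contraction constant
  set R : ℝ := Real.exp (Λ/γ) with hR_def
  have hRpos : 0 < R := Real.exp_pos _
  have hΛ0 : 0 ≤ Λ := by
    obtain ⟨k0⟩ := (inferInstance : Nonempty ι)
    rw [hΛ]
    exact le_trans (abs_nonneg _)
      (Finset.le_sup' (fun kl : ι × ι =>
        |(1/2) * Real.log ((p kl.1 * q kl.2) / (p kl.2 * q kl.1))|)
        (Finset.mem_univ (k0, k0)))
  have hR1 : 1 ≤ R := by
    rw [hR_def, show (1:ℝ) = Real.exp 0 from (Real.exp_zero).symm]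
    exact Real.exp_le_exp.2 (by positivity)
  set K : ℝ := (R - 1)/(R + 1) with hK_def
  have hK0 : 0 ≤ K := div_nonneg (by linarith) (by linarith)
  have hK1 : K < 1 := (div_lt_one (by linarith)).2 (by linarith)
  have hKeq : (1 - Real.exp (-Λ/γ))/(1 + Real.exp (-Λ/γ)) = K := by
    have hexp : Real.exp (-Λ/γ) = R⁻¹ := by
      rw [neg_div, Real.exp_neg, hR_def]
    rw [hexp, hK_def]
    have h1 : (0:ℝ) < 1 + R⁻¹ := by positivity
    rw [div_eq_div_iff h1.ne' (by linarith : (0:ℝ) < R + 1).ne']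
    field_simp
  -- bound on the derivative
  have hDbound : ∀ ϑ, |D ϑ| ≤ K := by
    intro ϑ
    -- pairwise bound on the "tanh" values
    have hpair : ∀ k l, T ϑ k / S ϑ k - T ϑ l / S ϑ l ≤ 2 * K := by
      intro k l
      have hE : 0 < Real.exp (ϑ/(2*γ)) := Real.exp_pos _
      have hE' : 0 < Real.exp (-ϑ/(2*γ)) := Real.exp_pos _
      set u : ι → ℝ := fun j => Real.exp (ϑ/(2*γ)) * a j with hu_def
      set v : ι → ℝ := fun j => Real.exp (-ϑ/(2*γ)) * b j with hv_def
      have hu : ∀ j, 0 < u j := fun j => mul_pos hE (ha j)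
      have hv : ∀ j, 0 < v j := fun j => mul_pos hE' (hb j)
      have hform : ∀ j, T ϑ j / S ϑ j = (u j / v j - 1)/(u j / v j + 1) := by
        intro j
        have h1 : S ϑ j = u j + v j := rfl
        have h2 : T ϑ j = u j - v j := rfl
        rw [h1, h2]
        have hvne := (hv j).ne'
        have huv : (0:ℝ) < u j + v j := by have := hu j; have := hv j; linarith
        field_simp
      have hzw : u k / v k ≤ R^2 * (u l / v l) := by
        have hx : (0:ℝ) < (p k * q l) / (p l * q k) := by
          have := hp k; have := hq l; have := hp l; have := hq k; positivity
        have hlog : Real.log ((p k * q l) / (p l * q k)) ≤ 2 * Λ := by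
          have hle := Finset.le_sup' (fun kl : ι × ι =>
            |(1/2) * Real.log ((p kl.1 * q kl.2) / (p kl.2 * q kl.1))|)
            (Finset.mem_univ (k, l))
          rw [← hΛ] at hle
          have := le_trans (le_abs_self _) hle
          linarith
        have hratio : (u k / v k) / (u l / v l)
            = ((p k * q l) / (p l * q k)) ^ (1/γ) := by
          have h1 : ((p k * q l) / (p l * q k)) ^ (1/γ)
              = (a k * b l) / (a l * b k) := by
            rw [Real.div_rpow (mul_pos (hp k) (hq l)).le (mul_pos (hp l) (hq k)).le,
              Real.mul_rpow (hp k).le (hq l).le,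
              Real.mul_rpow (hp l).le (hq k).le]
          rw [h1, hu_def, hv_def]
          have := (ha k).ne'; have := (hb k).ne'
          have := (ha l).ne'; have := (hb l).ne'
          field_simp
        have hR2 : R^2 = Real.exp (2 * (Λ/γ)) := by
          rw [hR_def, sq, ← Real.exp_add]; ring_nf
        have hrle : (u k / v k) / (u l / v l) ≤ R^2 := by
          rw [hratio, hR2, Real.rpow_def_of_pos hx]
          refine Real.exp_le_exp.2 ?_
          have h2 : (1/γ) * Real.log ((p k * q l) / (p l * q k)) ≤ (1/γ) * (2*Λ) :=
            mul_le_mul_of_nonneg_left hlog (by positivity)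
          rw [mul_comm]
          calc (1/γ) * Real.log ((p k * q l) / (p l * q k)) ≤ (1/γ) * (2*Λ) := h2
          _ = 2 * (Λ/γ) := by ring
        have hwpos : 0 < u l / v l := div_pos (hu l) (hv l)
        calc u k / v k = ((u k / v k) / (u l / v l)) * (u l / v l) :=
              (div_mul_cancel₀ _ hwpos.ne').symm
        _ ≤ R^2 * (u l / v l) := mul_le_mul_of_nonneg_right hrle hwpos.le
      rw [hform k, hform l]
      exact key_pair hR1 (div_pos (hu k) (hv k)) (div_pos (hu l) (hv l)) hzw
    -- min and max of the values
    set M : ℝ := Finset.univ.sup' Finset.univ_nonempty (fun k => T ϑ k / S ϑ k)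
      with hM_def
    set m : ℝ := Finset.univ.inf' Finset.univ_nonempty (fun k => T ϑ k / S ϑ k)
      with hm_def
    have hMk : ∀ k, T ϑ k / S ϑ k ≤ M := fun k => by
      rw [hM_def]; exact Finset.le_sup' (fun k => T ϑ k / S ϑ k) (Finset.mem_univ k)
    have hmk : ∀ k, m ≤ T ϑ k / S ϑ k := fun k => by
      rw [hm_def]; exact Finset.inf'_le (fun k => T ϑ k / S ϑ k) (Finset.mem_univ k)
    have hMm : M - m ≤ 2 * K := by
      obtain ⟨k0, _, hk0⟩ := Finset.exists_mem_eq_sup' (Finset.univ_nonempty)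
        (fun k => T ϑ k / S ϑ k)
      obtain ⟨l0, _, hl0⟩ := Finset.exists_mem_eq_inf' (Finset.univ_nonempty)
        (fun k => T ϑ k / S ϑ k)
      rw [hM_def, hm_def, hk0, hl0]
      exact hpair k0 l0
    have hA := avg_mem (fun k => a k * S ϑ k ^ (γ-1)) (fun k => T ϑ k / S ϑ k)
      (fun k => mul_pos (ha k) (Real.rpow_pos_of_pos (hS ϑ k) _)) m M hmk hMk
    have hB := avg_mem (fun k => b k * S ϑ k ^ (γ-1)) (fun k => T ϑ k / S ϑ k)
      (fun k => mul_pos (hb k) (Real.rpow_pos_of_pos (hS ϑ k) _)) m M hmk hMk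
    obtain ⟨hA1, hA2⟩ := hA
    obtain ⟨hB1, hB2⟩ := hB
    have hDval : D ϑ = (1/2) *
        ((∑ k, a k * S ϑ k ^ (γ-1) * (T ϑ k / S ϑ k)) / F ϑ
          - (∑ k, b k * S ϑ k ^ (γ-1) * (T ϑ k / S ϑ k)) / G ϑ) := rfl
    rw [hDval]
    have hFr : F ϑ = ∑ k, a k * S ϑ k ^ (γ-1) := rfl
    have hGr : G ϑ = ∑ k, b k * S ϑ k ^ (γ-1) := rfl
    rw [hFr, hGr]
    rw [abs_mul, abs_of_pos (by norm_num : (0:ℝ) < 1/2)]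
    have habs : |(∑ k, a k * S ϑ k ^ (γ-1) * (T ϑ k / S ϑ k)) / (∑ k, a k * S ϑ k ^ (γ-1))
        - (∑ k, b k * S ϑ k ^ (γ-1) * (T ϑ k / S ϑ k)) / (∑ k, b k * S ϑ k ^ (γ-1))|
        ≤ 2 * K := by
      rw [abs_sub_le_iff]
      constructor <;> linarith
    linarith [habs]
  -- Lipschitz bound
  have hlip : ∀ x y : ℝ, |Φ x - Φ y| ≤ K * |x - y| := by
    intro x y
    have := Convex.norm_image_sub_le_of_norm_hasDerivWithin_le
      (f := Φ) (f' := D) (s := Set.univ) (C := K)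
      (fun t _ => (hΦ' t).hasDerivWithinAt)
      (fun t _ => by simpa [Real.norm_eq_abs] using hDbound t)
      convex_univ (Set.mem_univ y) (Set.mem_univ x)
    simpa [Real.norm_eq_abs] using this
  refine ⟨fun x y => by rw [hKeq]; exact hlip x y, by rw [hKeq]; exact hK1, ?_⟩
  have hlipW : LipschitzWith (Real.toNNReal K) Φ :=
    LipschitzWith.of_dist_le_mul (fun x y => by
      rw [Real.dist_eq, Real.dist_eq, Real.coe_toNNReal K hK0]; exact hlip x y)
  have hcontr : ContractingWith (Real.toNNReal K) Φ :=
    ⟨by rw [← NNReal.coe_lt_coe, Real.coe_toNNReal K hK0, NNReal.coe_one]; exact hK1,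
      hlipW⟩
  exact ⟨ContractingWith.fixedPoint Φ hcontr, hcontr.fixedPoint_isFixedPt,
    fun y hy => hcontr.fixedPoint_unique hy⟩
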